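/- Every nonconstant polynomial in H[t] whose norm polynomial has no real zeros and is not divisible by the square of a real irreducible quadratic has a right zero h ∈ H, i.e., admits a right factor (t - h). -/

import Mathlib

open Polynomial

def qI : Quaternion ℝ := ⟨0, 1, 0, 0⟩
def qJ : Quaternion ℝ := ⟨0, 0, 1, 0⟩
def qK : Quaternion ℝ := ⟨0, 0, 0, 1⟩

noncomputable def toQuatPoly : Polynomial ℝ →+* Polynomial (Quaternion ℝ) :=
  Polynomial.mapRingHom (algebraMap ℝ (Quaternion ℝ))

/-! ### Auxiliary machinery -/

/-- Componentwise application of a real-linear functional to a quaternion polynomial. -/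
noncomputable def qcomp (φ : Quaternion ℝ →ₗ[ℝ] ℝ) (P : Polynomial (Quaternion ℝ)) :
    Polynomial ℝ :=
  ⟨AddMonoidAlgebra.ofCoeff (Finsupp.mapRange φ (map_zero φ) P.toFinsupp.coeff)⟩

@[simp] lemma qcomp_coeff (φ : Quaternion ℝ →ₗ[ℝ] ℝ) (P : Polynomial (Quaternion ℝ)) (n : ℕ) :
    (qcomp φ P).coeff n = φ (P.coeff n) := by
  rcases P with ⟨⟨f⟩⟩
  show (Finsupp.mapRange φ (map_zero φ) f) n = _
  rw [Finsupp.mapRange_apply]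
  rfl

lemma qcomp_add (φ : Quaternion ℝ →ₗ[ℝ] ℝ) (P Q : Polynomial (Quaternion ℝ)) :
    qcomp φ (P + Q) = qcomp φ P + qcomp φ Q := by
  apply Polynomial.ext; intro n; simp

lemma qcomp_realmul (φ : Quaternion ℝ →ₗ[ℝ] ℝ) (M : Polynomial ℝ)
    (P : Polynomial (Quaternion ℝ)) :
    qcomp φ (toQuatPoly M * P) = M * qcomp φ P := by
  apply Polynomial.ext; intro n
  rw [qcomp_coeff, coeff_mul, coeff_mul, map_sum]
  refine Finset.sum_congr rfl fun x _ => ?_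
  rw [show (toQuatPoly M).coeff x.1 = ((M.coeff x.1 : ℝ) : Quaternion ℝ) by
        simp [toQuatPoly, Polynomial.coeff_map]]
  rw [Quaternion.coe_mul_eq_smul, map_smul, smul_eq_mul, qcomp_coeff]

lemma qcomp_mul_C (φ : Quaternion ℝ →ₗ[ℝ] ℝ) (P : Polynomial ℝ) (e : Quaternion ℝ) :
    qcomp φ (toQuatPoly P * C e) = φ e • P := by
  apply Polynomial.ext; intro n
  rw [qcomp_coeff, coeff_mul_C,
    show (toQuatPoly P).coeff n = ((P.coeff n : ℝ) : Quaternion ℝ) by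
      simp [toQuatPoly, Polynomial.coeff_map],
    Quaternion.coe_mul_eq_smul, map_smul, smul_eq_mul, coeff_smul, smul_eq_mul, mul_comm]

noncomputable def reL : Quaternion ℝ →ₗ[ℝ] ℝ :=
  { toFun := fun q => q.re, map_add' := by intros; rfl, map_smul' := by intros; rfl }
noncomputable def imIL : Quaternion ℝ →ₗ[ℝ] ℝ :=
  { toFun := fun q => q.imI, map_add' := by intros; rfl, map_smul' := by intros; rfl }
noncomputable def imJL : Quaternion ℝ →ₗ[ℝ] ℝ :=
  { toFun := fun q => q.imJ, map_add' := by intros; rfl, map_smul' := by intros; rfl }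
noncomputable def imKL : Quaternion ℝ →ₗ[ℝ] ℝ :=
  { toFun := fun q => q.imK, map_add' := by intros; rfl, map_smul' := by intros; rfl }

@[simp] lemma reL_apply (q : Quaternion ℝ) : reL q = q.re := rfl
@[simp] lemma imIL_apply (q : Quaternion ℝ) : imIL q = q.imI := rfl
@[simp] lemma imJL_apply (q : Quaternion ℝ) : imJL q = q.imJ := rfl
@[simp] lemma imKL_apply (q : Quaternion ℝ) : imKL q = q.imK := rfl

@[simp] lemma qI_re : qI.re = 0 := rfl
@[simp] lemma qI_imI : qI.imI = 1 := rfl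
@[simp] lemma qI_imJ : qI.imJ = 0 := rfl
@[simp] lemma qI_imK : qI.imK = 0 := rfl
@[simp] lemma qJ_re : qJ.re = 0 := rfl
@[simp] lemma qJ_imI : qJ.imI = 0 := rfl
@[simp] lemma qJ_imJ : qJ.imJ = 1 := rfl
@[simp] lemma qJ_imK : qJ.imK = 0 := rfl
@[simp] lemma qK_re : qK.re = 0 := rfl
@[simp] lemma qK_imI : qK.imI = 0 := rfl
@[simp] lemma qK_imJ : qK.imJ = 0 := rfl
@[simp] lemma qK_imK : qK.imK = 1 := rfl

lemma C_coe_commute (r : ℝ) (Z : Polynomial (Quaternion ℝ)) :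
    Commute (C ((r : ℝ) : Quaternion ℝ)) Z := by
  show _ = _
  apply Polynomial.ext; intro n
  rw [coeff_C_mul, coeff_mul_C, (Quaternion.coe_commute r _).eq]

lemma toQuatPoly_commute (P : Polynomial ℝ) (Z : Polynomial (Quaternion ℝ)) :
    Commute (toQuatPoly P) Z := by
  induction P using Polynomial.induction_on with
  | C a => simpa [toQuatPoly] using C_coe_commute a Z
  | add p q hp hq => simpa [map_add] using hp.add_left hq
  | monomial n a ih =>
    have he : toQuatPoly (C a * X ^ (n + 1)) =
        C ((a : Quaternion ℝ)) * X ^ (n + 1) := by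
      simp [toQuatPoly]
    rw [he]
    exact (C_coe_commute a Z).mul_left ((Polynomial.commute_X Z).pow_left _)

lemma quat_mul_self (q : Quaternion ℝ) :
    q * q = (2 * q.re) • q - ((Quaternion.normSq q : ℝ) : Quaternion ℝ) := by
  ext <;>
    simp [pow_two, Quaternion.re_mul, Quaternion.imI_mul, Quaternion.imJ_mul,
      Quaternion.imK_mul, Quaternion.normSq_def', Quaternion.re_coe, Quaternion.imI_coe,
      Quaternion.imJ_coe, Quaternion.imK_coe] <;> ring


lemma quat_bh (b c : Quaternion ℝ) (hb : Quaternion.normSq b ≠ 0) :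
    b * (-((Quaternion.normSq b)⁻¹ • (star b * c))) = -c := by
  rw [mul_neg, mul_smul_comm, ← mul_assoc, Quaternion.self_mul_star,
    Quaternion.coe_mul_eq_smul, smul_smul, inv_mul_cancel₀ hb, one_smul]

lemma quat_reh (b c : Quaternion ℝ) :
    (-((Quaternion.normSq b)⁻¹ • (star b * c))).re
      = -((Quaternion.normSq b)⁻¹ * (star b * c).re) := by simp

lemma quat_nsh (b c : Quaternion ℝ) :
    Quaternion.normSq (-((Quaternion.normSq b)⁻¹ • (star b * c)))
      = (Quaternion.normSq b)⁻¹ ^ 2 * (Quaternion.normSq b * Quaternion.normSq c) := by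
  rw [Quaternion.normSq_neg, Quaternion.normSq_smul, map_mul, Quaternion.normSq_star]

lemma quat_const (β γ : ℝ) (q : Quaternion ℝ) (h1 : q.re = -(β / 2))
    (h2 : Quaternion.normSq q = γ) :
    (((β : ℝ) : Quaternion ℝ) + q) * q = -(((γ : ℝ) : Quaternion ℝ)) := by
  rw [add_mul, quat_mul_self q, h2, h1, Quaternion.coe_mul_eq_smul,
    show 2 * (-(β / 2)) = -β by ring, neg_smul]
  abel

lemma poly_fac2 (β γ : ℝ) (q : Quaternion ℝ)
    (hconst : (((β : ℝ) : Quaternion ℝ) + q) * q = -(((γ : ℝ) : Quaternion ℝ))) :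
    (X + C (((β : ℝ) : Quaternion ℝ) + q)) * (X - C q)
      = X ^ 2 + C (((β : ℝ) : Quaternion ℝ)) * X + C (((γ : ℝ) : Quaternion ℝ)) := by
  rw [add_mul, mul_sub, mul_sub, X_mul_C, ← C_mul, hconst, ← sq, C_neg,
    sub_neg_eq_add, C_add, add_mul]
  abel

lemma toQuatPoly_quad (β γ : ℝ) : toQuatPoly (X ^ 2 + (C β * X + C γ))
    = X ^ 2 + (C (((β : ℝ) : Quaternion ℝ)) * X + C (((γ : ℝ) : Quaternion ℝ))) := by
  simp only [toQuatPoly, coe_mapRingHom, Polynomial.map_add, Polynomial.map_mul,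
    Polynomial.map_pow, Polynomial.map_X, Polynomial.map_C]
  rfl


lemma poly_Rfac (b c q : Quaternion ℝ) (hbh : b * q = -c) :
    C b * X + C c = C b * (X - C q) := by
  rw [mul_sub, ← C_mul, hbh, C_neg, sub_neg_eq_add]

lemma coeff_quad (u v w : ℝ) :
    ((C u * X ^ 2 + C v * X + C w).coeff 2 = u) ∧
    ((C u * X ^ 2 + C v * X + C w).coeff 1 = v) ∧
    ((C u * X ^ 2 + C v * X + C w).coeff 0 = w) := by
  refine ⟨?_, ?_, ?_⟩ <;> simp

set_option maxHeartbeats 1000000 in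
/-- Every nonconstant quaternion polynomial whose norm polynomial has no real zeros
and is not divisible by the square of a real irreducible quadratic has a right zero
`h ∈ ℍ`, i.e. admits a right factor `(t - h)`. -/
theorem quaternion_polynomial_has_right_zero (A₀ A₁ A₂ A₃ : Polynomial ℝ)
    (A : Polynomial (Quaternion ℝ))
    (hA : A = toQuatPoly A₀ + toQuatPoly A₁ * C qI + toQuatPoly A₂ * C qJ
        + toQuatPoly A₃ * C qK)
    (hdeg : 1 ≤ A.degree)
    (hnoreal : ∀ r : ℝ, (A₀ ^ 2 + A₁ ^ 2 + A₂ ^ 2 + A₃ ^ 2).eval r ≠ 0)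
    (hnosq : ∀ M : Polynomial ℝ, Irreducible M → M.degree = 2 →
      ¬ (M ^ 2 ∣ A₀ ^ 2 + A₁ ^ 2 + A₂ ^ 2 + A₃ ^ 2)) :
    ∃ (h : Quaternion ℝ) (A' : Polynomial (Quaternion ℝ)), A = A' * (X - C h) := by
  classical
  set N : Polynomial ℝ := A₀ ^ 2 + A₁ ^ 2 + A₂ ^ 2 + A₃ ^ 2 with hNdef
  have hN0 : N ≠ 0 := fun h => hnoreal 0 (by rw [h]; simp)
  set d := max (max A₀.natDegree A₁.natDegree) (max A₂.natDegree A₃.natDegree) with hd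
  -- some Aᵢ is nonconstant
  have hd1 : 1 ≤ d := by
    by_contra hcon
    push_neg at hcon
    have h0 : A₀.natDegree = 0 := by omega
    have h1 : A₁.natDegree = 0 := by omega
    have h2 : A₂.natDegree = 0 := by omega
    have h3 : A₃.natDegree = 0 := by omega
    obtain ⟨x₀, hx₀⟩ := natDegree_eq_zero.mp h0
    obtain ⟨x₁, hx₁⟩ := natDegree_eq_zero.mp h1
    obtain ⟨x₂, hx₂⟩ := natDegree_eq_zero.mp h2
    obtain ⟨x₃, hx₃⟩ := natDegree_eq_zero.mp h3
    rw [← hx₀, ← hx₁, ← hx₂, ← hx₃] at hA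
    have hAC : A.degree ≤ 0 := by
      rw [hA]
      have hterm : ∀ (x : ℝ) (e : Quaternion ℝ),
          (toQuatPoly (C x) * C e).degree ≤ 0 := by
        intro x e
        refine le_trans (degree_mul_le _ _) ?_
        have t1 : (toQuatPoly (C x)).degree ≤ 0 := by
          simp only [toQuatPoly, coe_mapRingHom, Polynomial.map_C]
          exact degree_C_le
        have t2 : (C e : Polynomial (Quaternion ℝ)).degree ≤ 0 := degree_C_le
        calc (toQuatPoly (C x)).degree + (C e : Polynomial (Quaternion ℝ)).degree
            ≤ 0 + 0 := add_le_add t1 t2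
          _ = 0 := by norm_num
      have t0 : (toQuatPoly (C x₀)).degree ≤ 0 := by
        simp only [toQuatPoly, coe_mapRingHom, Polynomial.map_C]
        exact degree_C_le
      refine le_trans (degree_add_le _ _) (max_le (le_trans (degree_add_le _ _)
        (max_le (le_trans (degree_add_le _ _) (max_le t0 (hterm _ _))) (hterm _ _)))
        (hterm _ _))
    have := le_trans hdeg hAC
    norm_num at this
  -- the norm polynomial has degree ≥ 2
  have sqcoeff : ∀ P : Polynomial ℝ, P.natDegree ≤ d →
      (P ^ 2).coeff (2 * d) = P.coeff d ^ 2 := by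
    intro P hP
    rw [sq, coeff_mul, Finset.sum_eq_single (d, d)]
    · rw [sq]
    · rintro ⟨i, j⟩ hmem hne
      rw [Finset.HasAntidiagonal.mem_antidiagonal] at hmem
      rcases lt_trichotomy i d with hlt | heq | hgt
      · rw [coeff_eq_zero_of_natDegree_lt (show P.natDegree < j by omega), mul_zero]
      · exact absurd (by simp [heq]; omega) hne
      · rw [coeff_eq_zero_of_natDegree_lt (show P.natDegree < i by omega), zero_mul]
    · intro hnot
      exact absurd (Finset.HasAntidiagonal.mem_antidiagonal.mpr (by ring)) hnot
  have hNd : 2 ≤ N.natDegree := by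
    have hc : N.coeff (2 * d) =
        A₀.coeff d ^ 2 + A₁.coeff d ^ 2 + A₂.coeff d ^ 2 + A₃.coeff d ^ 2 := by
      rw [hNdef]
      simp [coeff_add, sqcoeff A₀ (by omega), sqcoeff A₁ (by omega),
        sqcoeff A₂ (by omega), sqcoeff A₃ (by omega)]
    have keyP : ∀ P : Polynomial ℝ, P.natDegree = d → 0 < P.coeff d ^ 2 := by
      intro P hP
      have hP0 : P ≠ 0 := fun h => by rw [h] at hP; simp at hP; omega
      have hl : P.coeff d ≠ 0 := by
        have := Polynomial.leadingCoeff_ne_zero.mpr hP0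
        rwa [Polynomial.leadingCoeff, hP] at this
      positivity
    have hex : A₀.natDegree = d ∨ A₁.natDegree = d ∨ A₂.natDegree = d ∨ A₃.natDegree = d := by
      omega
    have hpos : 0 < N.coeff (2 * d) := by
      rw [hc]
      rcases hex with h | h | h | h <;>
        nlinarith [sq_nonneg (A₀.coeff d), sq_nonneg (A₁.coeff d), sq_nonneg (A₂.coeff d),
          sq_nonneg (A₃.coeff d), keyP _ h]
    have := le_natDegree_of_ne_zero (ne_of_gt hpos)
    omega
  have hNunit : ¬ IsUnit N := fun hu => by
    have := natDegree_eq_zero_of_isUnit hu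
    omega
  -- pick a monic irreducible quadratic factor M of N
  obtain ⟨p, hpirr, hpdvd⟩ := WfDvdMonoid.exists_irreducible_factor hNunit hN0
  set M := normalize p with hMdef
  have hMmonic : M.Monic := Polynomial.monic_normalize hpirr.ne_zero
  have hMirr : Irreducible M := (associated_normalize p).irreducible hpirr
  have hMdvd : M ∣ N := (normalize_associated p).dvd.trans hpdvd
  have hM0 : M ≠ 0 := hMmonic.ne_zero
  have hMdeg2 : M.degree = 2 := by
    have hnd : M.natDegree = 1 ∨ M.natDegree = 2 := by
      have h1 := hMirr.natDegree_pos
      have h2 : M.natDegree ≤ 2 := hMirr.natDegree_le_two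
      omega
    rcases hnd with h1 | h2
    · exfalso
      have hdeg1 : M.degree = 1 := by rw [degree_eq_natDegree hM0, h1]; rfl
      have hform := eq_X_add_C_of_degree_le_one (le_of_eq hdeg1)
      rw [show M.coeff 1 = 1 by rw [← h1]; exact hMmonic.coeff_natDegree, C_1, one_mul] at hform
      obtain ⟨V, hV⟩ := hMdvd
      apply hnoreal (-(M.coeff 0))
      rw [hV, eval_mul, show M.eval (-(M.coeff 0)) = 0 by rw [hform]; simp, zero_mul]
    · rw [degree_eq_natDegree hM0, h2]; rfl
  have hMnd : M.natDegree = 2 := natDegree_eq_of_degree_eq_some hMdeg2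
  have hMsq : ¬ (M ^ 2 ∣ N) := hnosq M hMirr hMdeg2
  have hM2coeff : M.coeff 2 = 1 := by rw [← hMnd]; exact hMmonic.coeff_natDegree
  -- divide A by toQuatPoly M
  set M' := toQuatPoly M with hM'def
  have hM'monic : M'.Monic := hMmonic.map _
  have hM'deg : M'.degree = 2 := by
    rw [hM'def]
    show (M.map _).degree = 2
    rw [degree_map_eq_of_injective (algebraMap ℝ (Quaternion ℝ)).injective]
    exact hMdeg2
  set S := A /ₘ M' with hSdef
  set R := A %ₘ M' with hRdef2
  have hAR : A = R + M' * S := (modByMonic_add_div A M').symm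
  have hRdeg : R.degree < 2 := by rw [← hM'deg]; exact degree_modByMonic_lt A hM'monic
  have hRcoeff : ∀ n, 2 ≤ n → R.coeff n = 0 := fun n hn =>
    coeff_eq_zero_of_degree_lt (lt_of_lt_of_le hRdeg (by exact_mod_cast hn))
  have hRle1 : R.degree ≤ 1 := (degree_le_iff_coeff_zero R 1).mpr (by
    intro m hm
    have : (1 : ℕ) < m := by exact_mod_cast hm
    exact hRcoeff m (by omega))
  set b := R.coeff 1 with hbdef
  set c := R.coeff 0 with hcdef
  have hRform : R = C b * X + C c := eq_X_add_C_of_degree_le_one hRle1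
  -- componentwise decomposition
  have hqcomp_deg : ∀ φ : Quaternion ℝ →ₗ[ℝ] ℝ, (qcomp φ R).degree ≤ 1 := fun φ =>
    (degree_le_iff_coeff_zero _ 1).mpr (by
      intro m hm
      have : (1 : ℕ) < m := by exact_mod_cast hm
      rw [qcomp_coeff, hRcoeff m (by omega), map_zero])
  have hcompA : ∀ φ : Quaternion ℝ →ₗ[ℝ] ℝ, qcomp φ A =
      φ 1 • A₀ + φ qI • A₁ + φ qJ • A₂ + φ qK • A₃ := by
    intro φ
    rw [hA, show toQuatPoly A₀ = toQuatPoly A₀ * C 1 by rw [C_1, mul_one]]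
    rw [qcomp_add, qcomp_add, qcomp_add, qcomp_mul_C, qcomp_mul_C, qcomp_mul_C, qcomp_mul_C]
  have ecomp : ∀ (φ : Quaternion ℝ →ₗ[ℝ] ℝ) (Ai : Polynomial ℝ),
      φ 1 • A₀ + φ qI • A₁ + φ qJ • A₂ + φ qK • A₃ = Ai →
      Ai = qcomp φ R + M * qcomp φ S := by
    intro φ Ai hval
    have h2 : qcomp φ A = qcomp φ R + M * qcomp φ S := by
      rw [hAR, qcomp_add, hM'def, qcomp_realmul]
    rw [hcompA φ, hval] at h2
    exact h2
  have e0 : A₀ = qcomp reL R + M * qcomp reL S := ecomp reL A₀ (by simp [Quaternion.re_one])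
  have e1 : A₁ = qcomp imIL R + M * qcomp imIL S := ecomp imIL A₁ (by simp [Quaternion.imI_one])
  have e2 : A₂ = qcomp imJL R + M * qcomp imJL S := ecomp imJL A₂ (by simp [Quaternion.imJ_one])
  have e3 : A₃ = qcomp imKL R + M * qcomp imKL S := ecomp imKL A₃ (by simp [Quaternion.imK_one])
  set RR : Polynomial ℝ := qcomp reL R ^ 2 + qcomp imIL R ^ 2 + qcomp imJL R ^ 2
      + qcomp imKL R ^ 2 with hRRdef
  have hNsplit : N = RR + M * (M * (qcomp reL S ^ 2 + qcomp imIL S ^ 2 + qcomp imJL S ^ 2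
      + qcomp imKL S ^ 2) + 2 * (qcomp reL S * qcomp reL R + qcomp imIL S * qcomp imIL R
      + qcomp imJL S * qcomp imJL R + qcomp imKL S * qcomp imKL R)) := by
    rw [hNdef, e0, e1, e2, e3, hRRdef]; ring
  have hMdvdRR : M ∣ RR := by
    have h := hMdvd
    rw [hNsplit, add_comm] at h
    exact (dvd_add_right (dvd_mul_right M _)).mp h
  have hRi : ∀ φ : Quaternion ℝ →ₗ[ℝ] ℝ, qcomp φ R = C (φ b) * X + C (φ c) := by
    intro φ
    have := eq_X_add_C_of_degree_le_one (hqcomp_deg φ)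
    rwa [qcomp_coeff, qcomp_coeff] at this
  have hRRform : RR = C (Quaternion.normSq b) * X ^ 2 + C (2 * ((star b * c).re)) * X
      + C (Quaternion.normSq c) := by
    rw [hRRdef, hRi reL, hRi imIL, hRi imJL, hRi imKL]
    have hnb : Quaternion.normSq b = b.re ^ 2 + b.imI ^ 2 + b.imJ ^ 2 + b.imK ^ 2 := by
      rw [Quaternion.normSq_def']
    have hnc : Quaternion.normSq c = c.re ^ 2 + c.imI ^ 2 + c.imJ ^ 2 + c.imK ^ 2 := by
      rw [Quaternion.normSq_def']
    have hipval : (star b * c).re = b.re * c.re + b.imI * c.imI + b.imJ * c.imJ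
        + b.imK * c.imK := by
      simp [Quaternion.re_mul]
    simp only [hnb, hnc, hipval, reL_apply, imIL_apply, imJL_apply, imKL_apply,
      map_add, map_mul, map_pow, map_ofNat]
    ring
  by_cases hb : b = 0
  · -- impossible: N would be divisible by M²
    exfalso
    have hcz : Quaternion.normSq c = 0 := by
      by_contra hcz
      have hRR0 : RR = C (Quaternion.normSq c) := by rw [hRRform, hb]; simp [Quaternion.re_zero]
      have hdle : M.degree ≤ (C (Quaternion.normSq c)).degree :=
        degree_le_of_dvd (hRR0 ▸ hMdvdRR) (by simp [hcz])
      rw [degree_C hcz, hMdeg2] at hdle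
      norm_num at hdle
    have hc0 : c = 0 := by simpa using hcz
    apply hMsq
    have hz : ∀ φ : Quaternion ℝ →ₗ[ℝ] ℝ, qcomp φ R = 0 := fun φ => by
      rw [hRi φ, hb, hc0]; simp
    refine ⟨qcomp reL S ^ 2 + qcomp imIL S ^ 2 + qcomp imJL S ^ 2 + qcomp imKL S ^ 2, ?_⟩
    rw [hNdef, e0, e1, e2, e3, hz, hz, hz, hz]; ring
  · have he2 : Quaternion.normSq b ≠ 0 := by simpa using hb
    set β := M.coeff 1 with hβ
    set γ := M.coeff 0 with hγ
    obtain ⟨V, hV⟩ := hMdvdRR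
    have hRRdeg : RR.degree = 2 := by rw [hRRform]; exact degree_quadratic he2
    have hV0 : V ≠ 0 := by
      rintro rfl
      rw [mul_zero] at hV
      rw [hV] at hRRdeg
      simp at hRRdeg
    have hVdeg : V.degree = 0 := by
      have hh := hRRdeg
      rw [hV, degree_mul, hMdeg2, degree_eq_natDegree hV0] at hh
      have : ((2 + V.natDegree : ℕ) : WithBot ℕ) = ((2 : ℕ) : WithBot ℕ) := by
        push_cast
        exact_mod_cast hh
      have : 2 + V.natDegree = 2 := by exact_mod_cast this
      rw [degree_eq_natDegree hV0]
      exact_mod_cast by omega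
    have hVC : V = C (V.coeff 0) := eq_C_of_degree_le_zero (le_of_eq hVdeg)
    have hcoe : ∀ n, RR.coeff n = M.coeff n * V.coeff 0 := by
      intro n
      rw [hV]
      conv_lhs => rw [hVC]
      rw [coeff_mul_C]
    have hcoe2 : Quaternion.normSq b = V.coeff 0 := by
      have hh := hcoe 2
      rw [hRRform, (coeff_quad _ _ _).1, hM2coeff, one_mul] at hh
      exact hh
    have hcoe1 : 2 * (star b * c).re = β * Quaternion.normSq b := by
      have hh := hcoe 1
      rw [hRRform, (coeff_quad _ _ _).2.1] at hh
      rw [hh, hcoe2]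
    have hcoe0 : Quaternion.normSq c = γ * Quaternion.normSq b := by
      have hh := hcoe 0
      rw [hRRform, (coeff_quad _ _ _).2.2] at hh
      rw [hh, hcoe2]
    set hq : Quaternion ℝ := -((Quaternion.normSq b)⁻¹ • (star b * c)) with hhq
    have hbh : b * hq = -c := by rw [hhq]; exact quat_bh b c he2
    have hre : hq.re = -(β / 2) := by
      rw [hhq, quat_reh b c]
      have h2 : (star b * c).re = β * Quaternion.normSq b / 2 := by linarith
      rw [h2]
      field_simp
    have hns : Quaternion.normSq hq = γ := by
      rw [hhq, quat_nsh b c, hcoe0]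
      field_simp
    -- shape of M
    have hMX : M = X ^ 2 + (C β * X + C γ) := by
      have hdle : (M - X ^ 2).degree ≤ 1 := (degree_le_iff_coeff_zero _ 1).mpr (by
        intro m hm
        have hm2 : (1 : ℕ) < m := by exact_mod_cast hm
        rw [coeff_sub, coeff_X_pow]
        rcases eq_or_ne m 2 with h | h
        · rw [h, hM2coeff]; simp
        · rw [coeff_eq_zero_of_natDegree_lt (show M.natDegree < m by omega), if_neg (by omega)]
          ring)
      have hsub := eq_X_add_C_of_degree_le_one hdle
      rw [coeff_sub, coeff_sub, coeff_X_pow] at hsub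
      norm_num at hsub
      linear_combination hsub
    -- factor M' over the quaternions
    have hconst := quat_const β γ hq hre hns
    have hM'fac : M' = (X + C (((β : ℝ) : Quaternion ℝ) + hq)) * (X - C hq) := by
      rw [hM'def, hMX, toQuatPoly_quad β γ, poly_fac2 β γ hq hconst]
      exact (add_assoc _ _ _).symm
    have hRfac : R = C b * (X - C hq) := by
      rw [hRform]
      exact poly_Rfac b c hq hbh
    have hcomm : M' * S = S * M' := (toQuatPoly_commute M S).eq
    refine ⟨hq, C b + S * (X + C (((β : ℝ) : Quaternion ℝ) + hq)), ?_⟩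
    rw [hAR, hRfac, hcomm, hM'fac]
    conv_rhs => rw [add_mul, mul_assoc]
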